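/- For all real numbers α ≥ 0 and x ∈ (0,1], one has ln(e + α/x) ≤ ln(e + α) · (1 − ln x). -/
import Mathlib

theorem log_interpolation_bound (α x : ℝ) (hα : 0 ≤ α) (hx : 0 < x) (hx1 : x ≤ 1) :
    Real.log (Real.exp 1 + α / x) ≤ Real.log (Real.exp 1 + α) * (1 - Real.log x) := by
  have he : (0:ℝ) < Real.exp 1 := Real.exp_pos 1
  have h1 : Real.exp 1 + α / x ≤ (Real.exp 1 + α) / x := by
    rw [add_div]
    have : Real.exp 1 ≤ Real.exp 1 / x := by
      rw [le_div_iff₀ hx]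
      nlinarith
    linarith
  have hpos : 0 < Real.exp 1 + α / x := by positivity
  have h2 : Real.log (Real.exp 1 + α / x) ≤ Real.log (Real.exp 1 + α) - Real.log x := by
    calc Real.log (Real.exp 1 + α / x) ≤ Real.log ((Real.exp 1 + α) / x) :=
          Real.log_le_log hpos h1
      _ = Real.log (Real.exp 1 + α) - Real.log x := Real.log_div (by positivity) (ne_of_gt hx)
  have h3 : 1 ≤ Real.log (Real.exp 1 + α) := by
    calc (1:ℝ) = Real.log (Real.exp 1) := (Real.log_exp 1).symm
      _ ≤ Real.log (Real.exp 1 + α) := Real.log_le_log he (by linarith)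
  have h4 : Real.log x ≤ 0 := Real.log_nonpos (le_of_lt hx) hx1
  nlinarith [h2, h3, h4]
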